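/- Let m ≥ 3, n ≥ 4, n ≥ m, and ω = e^{2πi/(n−2)}. The states S_j = (1/√2)(|j⟩ − |j+1 mod m⟩) ⊗ |j⟩ (0 ≤ j ≤ m−1), L_{jk} = |j⟩ ⊗ (1/√(n−2))(Σ_{i=0}^{m−3} ω^{ik}|i+j+1 mod m⟩ + Σ_{i=m−2}^{n−3} ω^{ik}|i+2⟩) (0 ≤ j ≤ m−1, 1 ≤ k ≤ n−3), and F = (1/√(nm)) Σ_{i=0}^{m−1} Σ_{j=0}^{n−1} |i⟩ ⊗ |j⟩ form a set of mn − 2m + 1 mutually orthogonal unit product vectors in ℂᵐ ⊗ ℂⁿ. -/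

import Mathlib

open Finset
open scoped ComplexConjugate

/-- ω = e^{2πi/(n−2)}. -/
noncomputable def gt2ω (n : ℕ) : ℂ := Complex.exp (2 * Real.pi * Complex.I / ((n : ℂ) - 2))

/-- Short tile state S_j = (1/√2)(|j⟩ − |j+1 mod m⟩) ⊗ |j⟩ in ℂᵐ ⊗ ℂⁿ. -/
noncomputable def gt2S (m n j : ℕ) : EuclideanSpace ℂ (Fin m × Fin n) :=
  WithLp.toLp 2 fun p : Fin m × Fin n => (1 / (Real.sqrt 2 : ℂ)) *
    ((if (p.1 : ℕ) = j % m then 1 else 0) - (if (p.1 : ℕ) = (j + 1) % m then 1 else 0)) *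
    (if (p.2 : ℕ) = j then 1 else 0)

/-- Long tile state
L_{jk} = |j⟩ ⊗ (1/√(n−2))(Σ_{i=0}^{m−3} ω^{ik}|i+j+1 mod m⟩ + Σ_{i=m−2}^{n−3} ω^{ik}|i+2⟩). -/
noncomputable def gt2L (m n j k : ℕ) : EuclideanSpace ℂ (Fin m × Fin n) :=
  WithLp.toLp 2 fun p : Fin m × Fin n => (if (p.1 : ℕ) = j % m then 1 else 0) * (1 / (Real.sqrt ((n : ℝ) - 2) : ℂ)) *
    ((∑ i ∈ range (m - 2), if (p.2 : ℕ) = (i + j + 1) % m then gt2ω n ^ (i * k) else 0) +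
     (∑ i ∈ Ico (m - 2) (n - 2), if (p.2 : ℕ) = i + 2 then gt2ω n ^ (i * k) else 0))

/-- The stopper F = (1/√(nm)) Σ_{i,j} |i⟩ ⊗ |j⟩. -/
noncomputable def gt2F (m n : ℕ) : EuclideanSpace ℂ (Fin m × Fin n) :=
  WithLp.toLp 2 fun _ : Fin m × Fin n => 1 / (Real.sqrt ((n : ℝ) * m) : ℂ)

/-- Index type for GenTiles2: short tiles (0 ≤ j ≤ m−1), long tiles
(0 ≤ j ≤ m−1, 1 ≤ k ≤ n−3), and the stopper; mn − 2m + 1 states in all. -/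
abbrev GT2Index (m n : ℕ) := Fin m ⊕ ((Fin m × Fin (n - 3)) ⊕ Unit)

/-- The GenTiles2 family in ℂᵐ ⊗ ℂⁿ. -/
noncomputable def gt2 (m n : ℕ) : GT2Index m n → EuclideanSpace ℂ (Fin m × Fin n)
  | Sum.inl j => gt2S m n (j : ℕ)
  | Sum.inr (Sum.inl (j, k)) => gt2L m n (j : ℕ) ((k : ℕ) + 1)
  | Sum.inr (Sum.inr _) => gt2F m n

section helpers
variable {m n : ℕ}

/-- position of index i in the long tile -/
def gt2pos (m j i : ℕ) : ℕ := if i < m - 2 then (i + j + 1) % m else i + 2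

lemma gt2pos_lt (hm : 3 ≤ m) (hnm : m ≤ n) {i : ℕ} (hi : i < n - 2) (j : ℕ) :
    gt2pos m j i < n := by
  unfold gt2pos
  split_ifs
  · exact lt_of_lt_of_le (Nat.mod_lt _ (by omega)) hnm
  · omega

lemma gt2pos_inj (hm : 3 ≤ m) {i i' : ℕ} (hi : i < n - 2) (hi' : i' < n - 2) (j : ℕ)
    (h : gt2pos m j i = gt2pos m j i') : i = i' := by
  unfold gt2pos at h
  split_ifs at h with h1 h2 h2
  · -- both < m-2 : mod equality
    have h3 : i % m = i' % m := by
      refine Nat.ModEq.add_right_cancel' (j + 1) ?_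
      show (i + (j + 1)) % m = (i' + (j + 1)) % m
      rw [← Nat.add_assoc, ← Nat.add_assoc]
      exact h
    rw [Nat.mod_eq_of_lt (by omega), Nat.mod_eq_of_lt (by omega)] at h3
    exact h3
  · have := Nat.mod_lt (i + j + 1) (show 0 < m by omega)
    omega
  · have := Nat.mod_lt (i' + j + 1) (show 0 < m by omega)
    omega
  · omega

end helpers

section bpart
variable {m n : ℕ}

lemma sum_ite_coe {n a : ℕ} (ha : a < n) (f : Fin n → ℂ) :
    ∑ x : Fin n, (if (x : ℕ) = a then f x else 0) = f ⟨a, ha⟩ := by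
  have h : ∀ x : Fin n, ((x : ℕ) = a) ↔ (x = ⟨a, ha⟩) := fun x => by rw [Fin.ext_iff]
  simp only [h]
  simp

noncomputable def gt2b (m n j k : ℕ) : Fin n → ℂ := fun y =>
  (∑ i ∈ range (m - 2), if (y : ℕ) = (i + j + 1) % m then gt2ω n ^ (i * k) else 0) +
  (∑ i ∈ Ico (m - 2) (n - 2), if (y : ℕ) = i + 2 then gt2ω n ^ (i * k) else 0)

lemma gt2b_eq (hm : 3 ≤ m) (hnm : m ≤ n) (j k : ℕ) (y : Fin n) :
    gt2b m n j k y
      = ∑ i ∈ range (n - 2), if (y : ℕ) = gt2pos m j i then gt2ω n ^ (i * k) else 0 := by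
  unfold gt2b
  rw [range_eq_Ico (a := n - 2), ← Finset.sum_Ico_consecutive _ (Nat.zero_le (m - 2))
    (by omega : m - 2 ≤ n - 2), ← range_eq_Ico]
  congr 1
  · exact sum_congr rfl fun i hi => by rw [gt2pos, if_pos (mem_range.mp hi)]
  · exact sum_congr rfl fun i hi => by
      rw [gt2pos, if_neg (show ¬ i < m - 2 by have := (mem_Ico.mp hi).1; omega)]

lemma gt2b_inner (hm : 3 ≤ m) (hnm : m ≤ n) (j k k' : ℕ) :
    ∑ y : Fin n, conj (gt2b m n j k y) * gt2b m n j k' y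
      = ∑ i ∈ range (n - 2), conj (gt2ω n ^ (i * k)) * gt2ω n ^ (i * k') := by
  simp only [gt2b_eq hm hnm, map_sum, apply_ite conj, map_zero]
  have step1 : ∀ y : Fin n,
      (∑ i ∈ range (n - 2), if (y : ℕ) = gt2pos m j i then conj (gt2ω n ^ (i * k)) else 0) *
      (∑ i ∈ range (n - 2), if (y : ℕ) = gt2pos m j i then gt2ω n ^ (i * k') else 0)
      = ∑ i ∈ range (n - 2), ∑ i' ∈ range (n - 2),
          (if (y : ℕ) = gt2pos m j i then conj (gt2ω n ^ (i * k)) else 0) *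
          (if (y : ℕ) = gt2pos m j i' then gt2ω n ^ (i' * k') else 0) := fun y =>
    Finset.sum_mul_sum _ _ _ _
  simp only [step1]
  rw [Finset.sum_comm]
  have step2 : ∀ i ∈ range (n - 2),
      (∑ y : Fin n, ∑ i' ∈ range (n - 2),
        (if (y : ℕ) = gt2pos m j i then conj (gt2ω n ^ (i * k)) else 0) *
        (if (y : ℕ) = gt2pos m j i' then gt2ω n ^ (i' * k') else 0))
      = conj (gt2ω n ^ (i * k)) * gt2ω n ^ (i * k') := by
    intro i hi
    rw [Finset.sum_comm]
    have step3 : ∀ i' ∈ range (n - 2),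
        (∑ y : Fin n,
          (if (y : ℕ) = gt2pos m j i then conj (gt2ω n ^ (i * k)) else 0) *
          (if (y : ℕ) = gt2pos m j i' then gt2ω n ^ (i' * k') else 0))
        = if i = i' then conj (gt2ω n ^ (i * k)) * gt2ω n ^ (i * k') else 0 := by
      intro i' hi'
      by_cases hii : i = i'
      · subst hii
        rw [if_pos rfl]
        have hmul : ∀ y : Fin n,
            (if (y : ℕ) = gt2pos m j i then conj (gt2ω n ^ (i * k)) else 0) *
            (if (y : ℕ) = gt2pos m j i then gt2ω n ^ (i * k') else 0)
            = if (y : ℕ) = gt2pos m j i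
              then conj (gt2ω n ^ (i * k)) * gt2ω n ^ (i * k') else 0 := fun y => by
          split_ifs <;> ring
        simp only [hmul]
        exact sum_ite_coe (gt2pos_lt hm hnm (mem_range.mp hi) j) _
      · rw [if_neg hii]
        refine Finset.sum_eq_zero fun y _ => ?_
        by_cases h1 : (y : ℕ) = gt2pos m j i
        · by_cases h2 : (y : ℕ) = gt2pos m j i'
          · exact absurd (gt2pos_inj hm (mem_range.mp hi) (mem_range.mp hi') j (h1 ▸ h2)) hii
          · rw [if_neg h2, mul_zero]
        · rw [if_neg h1, zero_mul]
    rw [Finset.sum_congr rfl step3, Finset.sum_ite_eq _ i, if_pos hi]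
  exact Finset.sum_congr rfl step2

lemma gt2b_sum (hm : 3 ≤ m) (hnm : m ≤ n) (j k : ℕ) :
    ∑ y : Fin n, gt2b m n j k y = ∑ i ∈ range (n - 2), gt2ω n ^ (i * k) := by
  simp only [gt2b_eq hm hnm]
  rw [Finset.sum_comm]
  exact Finset.sum_congr rfl fun i hi =>
    sum_ite_coe (gt2pos_lt hm hnm (mem_range.mp hi) j) _

end bpart

section more
variable {m n : ℕ}

lemma gt2ω_root (hn : 4 ≤ n) : IsPrimitiveRoot (gt2ω n) (n - 2) := by
  have h2 : ((n - 2 : ℕ) : ℂ) = (n : ℂ) - 2 := by push_cast [Nat.cast_sub (by omega : 2 ≤ n)]; ring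
  rw [gt2ω, ← h2]
  exact Complex.isPrimitiveRoot_exp _ (by omega)

lemma geom_zero (hn : 4 ≤ n) {d : ℕ} (hd1 : 1 ≤ d) (hd2 : d < n - 2) :
    ∑ i ∈ range (n - 2), gt2ω n ^ (i * d) = 0 := by
  have hroot := gt2ω_root hn
  have hne : gt2ω n ^ d ≠ 1 := hroot.pow_ne_one_of_pos_of_lt (by omega) hd2
  have hp : ∀ i, gt2ω n ^ (i * d) = (gt2ω n ^ d) ^ i := fun i => by rw [← pow_mul, Nat.mul_comm]
  simp only [hp]
  rw [geom_sum_eq hne, ← pow_mul, Nat.mul_comm d, pow_mul, hroot.pow_eq_one, one_pow]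
  simp

lemma conj_gt2ω : conj (gt2ω n) = (gt2ω n)⁻¹ := by
  rw [gt2ω, ← Complex.exp_conj, ← Complex.exp_neg]
  congr 1
  simp [map_div₀, map_ofNat]
  ring

lemma gt2b_at_self (hm : 3 ≤ m) {j j' k : ℕ} (hj : j < m) (hj' : j' < m)
    (hjn : j < n) (hcase : j' = j ∨ j' = (j + 1) % m) :
    gt2b m n j' k ⟨j, hjn⟩ = 0 := by
  unfold gt2b
  rw [show ((⟨j, hjn⟩ : Fin n) : ℕ) = j from rfl]
  have h1 : ∑ i ∈ range (m - 2), (if j = (i + j' + 1) % m then gt2ω n ^ (i * k) else 0) = 0 := by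
    refine Finset.sum_eq_zero fun i hi => ?_
    rw [if_neg]
    intro h
    have hmod : (i + j' + 1) % m = j % m := by rw [Nat.mod_eq_of_lt hj]; omega
    have hz : ((i + j' + 1 : ℕ) : ZMod m) = ((j : ℕ) : ZMod m) :=
      (ZMod.natCast_eq_natCast_iff' _ _ _).mpr hmod
    have him : i < m - 2 := mem_range.mp hi
    rcases hcase with hc | hc
    · subst hc
      have h0 : ((i + 1 : ℕ) : ZMod m) = 0 := by push_cast at hz ⊢; linear_combination hz
      have hdvd : m ∣ i + 1 := (ZMod.natCast_eq_zero_iff _ _).mp h0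
      have := Nat.le_of_dvd (by omega) hdvd
      omega
    · subst hc
      have hz' : ((i + (j + 1) + 1 : ℕ) : ZMod m) = ((j : ℕ) : ZMod m) := by
        rw [← hz]; push_cast [ZMod.natCast_mod]; ring
      have h0 : ((i + 2 : ℕ) : ZMod m) = 0 := by push_cast at hz' ⊢; linear_combination hz'
      have hdvd : m ∣ i + 2 := (ZMod.natCast_eq_zero_iff _ _).mp h0
      have := Nat.le_of_dvd (by omega) hdvd
      omega
  have h2 : ∑ i ∈ Ico (m - 2) (n - 2), (if j = i + 2 then gt2ω n ^ (i * k) else 0) = 0 := by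
    refine Finset.sum_eq_zero fun i hi => ?_
    have := (mem_Ico.mp hi).1
    rw [if_neg (by omega)]
  rw [h1, h2, add_zero]

lemma conj_pow_mul {k k' : ℕ} (hkk : k ≤ k') (i : ℕ) :
    conj (gt2ω n ^ (i * k)) * gt2ω n ^ (i * k') = gt2ω n ^ (i * (k' - k)) := by
  rw [map_pow, show conj (gt2ω n) = (gt2ω n)⁻¹ from conj_gt2ω, inv_pow,
    show i * k' = i * k + i * (k' - k) by rw [← Nat.mul_add, Nat.add_sub_cancel' hkk],
    pow_add]
  exact inv_mul_cancel_left₀ (pow_ne_zero _ (Complex.exp_ne_zero _)) _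

lemma LL_off (hn : 4 ≤ n) {k k' : ℕ} (hk : 1 ≤ k) (hk' : k' < n - 2) (hkk : k < k') :
    ∑ i ∈ range (n - 2), conj (gt2ω n ^ (i * k)) * gt2ω n ^ (i * k') = 0 := by
  simp only [conj_pow_mul (le_of_lt hkk)]
  exact geom_zero hn (by omega) (by omega)

lemma LL_diag (k : ℕ) :
    ∑ i ∈ range (n - 2), conj (gt2ω n ^ (i * k)) * gt2ω n ^ (i * k) = ((n - 2 : ℕ) : ℂ) := by
  simp only [conj_pow_mul (le_refl k), Nat.sub_self, Nat.mul_zero, pow_zero]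
  simp

lemma norm_eq_one_of_inner {E : Type*} [NormedAddCommGroup E] [InnerProductSpace ℂ E]
    (x : E) (h : (inner ℂ x x : ℂ) = 1) : ‖x‖ = 1 := by
  rw [norm_eq_sqrt_re_inner (𝕜 := ℂ), h]
  simp

end more


section comps
variable {m n : ℕ}

lemma inner_prod_form {m n : ℕ} (f g : Fin m → ℂ) (u v : Fin n → ℂ)
    (x y : EuclideanSpace ℂ (Fin m × Fin n))
    (hx : ∀ p, x p = f p.1 * u p.2) (hy : ∀ p, y p = g p.1 * v p.2) :
    (inner ℂ x y : ℂ) = (∑ x, conj (f x) * g x) * (∑ y, conj (u y) * v y) := by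
  simp only [PiLp.inner_apply, RCLike.inner_apply, hx, hy, Fintype.sum_prod_type, map_mul]
  rw [Finset.sum_mul_sum]
  exact Finset.sum_congr rfl fun x _ => Finset.sum_congr rfl fun y _ => by ring

noncomputable def gt2fS (m j : ℕ) : Fin m → ℂ := fun x =>
  (1 / (Real.sqrt 2 : ℂ)) *
    ((if (x : ℕ) = j % m then 1 else 0) - (if (x : ℕ) = (j + 1) % m then 1 else 0))

noncomputable def gt2uS (n j : ℕ) : Fin n → ℂ := fun y => if (y : ℕ) = j then 1 else 0

noncomputable def gt2fL (m n j : ℕ) : Fin m → ℂ := fun x =>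
  (if (x : ℕ) = j % m then 1 else 0) * (1 / (Real.sqrt ((n : ℝ) - 2) : ℂ))

lemma gt2S_eq (m n j : ℕ) : ∀ p, gt2S m n j p = gt2fS m j p.1 * gt2uS n j p.2 := fun _ => rfl

lemma gt2L_eq (m n j k : ℕ) : ∀ p, gt2L m n j k p = gt2fL m n j p.1 * gt2b m n j k p.2 :=
  fun _ => rfl

lemma gt2F_eq (m n : ℕ) : ∀ p : Fin m × Fin n,
    gt2F m n p = (fun _ : Fin m => (1 / (Real.sqrt ((n : ℝ) * m) : ℂ))) p.1 *
      (fun _ : Fin n => (1 : ℂ)) p.2 := fun _ => (mul_one _).symm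

lemma conj_invsqrt (r : ℝ) : conj (1 / (Real.sqrt r : ℂ)) = 1 / (Real.sqrt r : ℂ) := by
  rw [map_div₀, map_one, Complex.conj_ofReal]

lemma sum_delta_mul {m : ℕ} {a : ℕ} (ha : a < m) (b : ℕ) :
    ∑ x : Fin m, (if (x : ℕ) = a then (1 : ℂ) else 0) * (if (x : ℕ) = b then 1 else 0)
      = if a = b then 1 else 0 := by
  simp only [ite_mul, one_mul, zero_mul]
  simpa using sum_ite_coe ha (fun x => if (x : ℕ) = b then (1 : ℂ) else 0)

lemma sum_delta {m : ℕ} {a : ℕ} (ha : a < m) :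
    ∑ x : Fin m, (if (x : ℕ) = a then (1 : ℂ) else 0) = 1 := by
  simpa using sum_ite_coe ha (fun _ => (1 : ℂ))

lemma sqrt2_sq : (Real.sqrt 2 : ℂ) * (Real.sqrt 2 : ℂ) = 2 := by
  rw [← Complex.ofReal_mul, Real.mul_self_sqrt (by norm_num)]
  norm_num

lemma sum_fSfS (hm : 3 ≤ m) {j : ℕ} (hj : j < m) :
    ∑ x : Fin m, conj (gt2fS m j x) * gt2fS m j x = 1 := by
  have hab : j % m ≠ (j + 1) % m := by
    rw [Nat.mod_eq_of_lt hj]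
    rcases Nat.lt_or_ge (j + 1) m with h | h
    · rw [Nat.mod_eq_of_lt h]; omega
    · have he : j + 1 = m := by omega
      rw [he, Nat.mod_self]; omega
  have hs2 : (Real.sqrt 2 : ℂ) ≠ 0 :=
    Complex.ofReal_ne_zero.mpr (ne_of_gt (Real.sqrt_pos.mpr (by norm_num)))
  have expand : ∀ x : Fin m, conj (gt2fS m j x) * gt2fS m j x
      = (1 / (2 : ℂ)) * ((if (x : ℕ) = j % m then 1 else 0)
          + (if (x : ℕ) = (j + 1) % m then 1 else 0)) := by
    intro x
    simp only [gt2fS, map_mul, map_sub, map_div₀, map_one, Complex.conj_ofReal,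
      apply_ite conj, map_zero]
    by_cases h1 : (x : ℕ) = j % m <;> by_cases h2 : (x : ℕ) = (j + 1) % m
    · exact absurd (h1.symm.trans h2) hab
    · simp only [if_pos h1, if_neg h2]
      field_simp
      linear_combination (-1 : ℂ) * sqrt2_sq
    · simp only [if_neg h1, if_pos h2]
      field_simp
      linear_combination (-1 : ℂ) * sqrt2_sq
    · simp only [if_neg h1, if_neg h2]; ring
  simp only [expand]
  rw [← mul_sum, sum_add_distrib, sum_delta (Nat.mod_lt _ (by omega)),
    sum_delta (Nat.mod_lt _ (by omega))]
  norm_num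

end comps

section sums2
variable {m n : ℕ}

lemma sum_fSfL (hm : 3 ≤ m) (j j' : ℕ) :
    ∑ x : Fin m, conj (gt2fS m j x) * gt2fL m n j' x
      = ((1 / (Real.sqrt 2 : ℂ)) * (1 / (Real.sqrt ((n : ℝ) - 2) : ℂ))) *
        ((if j % m = j' % m then (1 : ℂ) else 0) - (if (j + 1) % m = j' % m then 1 else 0)) := by
  have expand : ∀ x : Fin m, conj (gt2fS m j x) * gt2fL m n j' x
      = ((1 / (Real.sqrt 2 : ℂ)) * (1 / (Real.sqrt ((n : ℝ) - 2) : ℂ))) *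
        ((if (x : ℕ) = j % m then (1 : ℂ) else 0) * (if (x : ℕ) = j' % m then 1 else 0)
         - (if (x : ℕ) = (j + 1) % m then (1 : ℂ) else 0) *
             (if (x : ℕ) = j' % m then 1 else 0)) := by
    intro x
    simp only [gt2fS, gt2fL, map_mul, map_sub, map_div₀, map_one, Complex.conj_ofReal,
      apply_ite conj, map_zero]
    ring
  simp only [expand]
  rw [← mul_sum, sum_sub_distrib, sum_delta_mul (Nat.mod_lt _ (by omega : 0 < m)) (j' % m),
    sum_delta_mul (Nat.mod_lt _ (by omega : 0 < m)) (j' % m)]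

lemma sum_fS_const (hm : 3 ≤ m) (j : ℕ) (c : ℂ) :
    ∑ x : Fin m, conj (gt2fS m j x) * c = 0 := by
  have expand : ∀ x : Fin m, conj (gt2fS m j x) * c
      = ((1 / (Real.sqrt 2 : ℂ)) * c) *
        ((if (x : ℕ) = j % m then (1 : ℂ) else 0) - (if (x : ℕ) = (j + 1) % m then 1 else 0)) := by
    intro x
    simp only [gt2fS, map_mul, map_sub, map_div₀, map_one, Complex.conj_ofReal,
      apply_ite conj, map_zero]
    ring
  simp only [expand]
  rw [← mul_sum, sum_sub_distrib, sum_delta (Nat.mod_lt _ (by omega : 0 < m)),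
    sum_delta (Nat.mod_lt _ (by omega : 0 < m))]
  ring

lemma sum_fLfL (hm : 3 ≤ m) (j j' : ℕ) :
    ∑ x : Fin m, conj (gt2fL m n j x) * gt2fL m n j' x
      = ((1 / (Real.sqrt ((n : ℝ) - 2) : ℂ)) * (1 / (Real.sqrt ((n : ℝ) - 2) : ℂ))) *
        (if j % m = j' % m then (1 : ℂ) else 0) := by
  have expand : ∀ x : Fin m, conj (gt2fL m n j x) * gt2fL m n j' x
      = ((1 / (Real.sqrt ((n : ℝ) - 2) : ℂ)) * (1 / (Real.sqrt ((n : ℝ) - 2) : ℂ))) *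
        ((if (x : ℕ) = j % m then (1 : ℂ) else 0) * (if (x : ℕ) = j' % m then 1 else 0)) := by
    intro x
    simp only [gt2fL, map_mul, map_div₀, map_one, Complex.conj_ofReal,
      apply_ite conj, map_zero]
    ring
  simp only [expand]
  rw [← mul_sum, sum_delta_mul (Nat.mod_lt _ (by omega : 0 < m)) (j' % m)]

lemma sum_uSuS {j : ℕ} (hj : j < n) (j' : ℕ) :
    ∑ y : Fin n, conj (gt2uS n j y) * gt2uS n j' y = if j = j' then 1 else 0 := by
  simp only [gt2uS, apply_ite conj, map_one, map_zero]
  exact sum_delta_mul hj j'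

lemma sum_uS_b {j : ℕ} (hj : j < n) (j' k : ℕ) :
    ∑ y : Fin n, conj (gt2uS n j y) * gt2b m n j' k y = gt2b m n j' k ⟨j, hj⟩ := by
  simp only [gt2uS, apply_ite conj, map_one, map_zero, ite_mul, one_mul, zero_mul]
  exact sum_ite_coe hj _

end sums2

section cases
variable {m n : ℕ}

lemma ortho_SS (hnm : m ≤ n) (j j' : Fin m) (hjj : j ≠ j') :
    (inner ℂ (gt2S m n (j : ℕ)) (gt2S m n (j' : ℕ)) : ℂ) = 0 := by
  rw [inner_prod_form _ _ _ _ _ _ (gt2S_eq m n j) (gt2S_eq m n j'),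
    sum_uSuS (lt_of_lt_of_le j.isLt hnm) _,
    if_neg (fun h => hjj (Fin.ext h)), mul_zero]

lemma ortho_SL (hm : 3 ≤ m) (hnm : m ≤ n) (j j' : Fin m) (k : ℕ) :
    (inner ℂ (gt2S m n (j : ℕ)) (gt2L m n (j' : ℕ) k) : ℂ) = 0 := by
  rw [inner_prod_form _ _ _ _ _ _ (gt2S_eq m n j) (gt2L_eq m n j' k),
    sum_fSfL hm, sum_uS_b (lt_of_lt_of_le j.isLt hnm)]
  by_cases hA : (j : ℕ) % m = (j' : ℕ) % m
  · rw [gt2b_at_self hm j.isLt j'.isLt _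
      (Or.inl (by rw [← Nat.mod_eq_of_lt j'.isLt, ← hA, Nat.mod_eq_of_lt j.isLt])), mul_zero]
  · by_cases hB : ((j : ℕ) + 1) % m = (j' : ℕ) % m
    · rw [gt2b_at_self hm j.isLt j'.isLt _
        (Or.inr (by rw [← Nat.mod_eq_of_lt j'.isLt, ← hB])), mul_zero]
    · rw [if_neg hA, if_neg hB]
      ring

lemma ortho_LL_f (hm : 3 ≤ m) (j j' : Fin m) (hjj : j ≠ j') (k k' : ℕ) :
    (inner ℂ (gt2L m n (j : ℕ) k) (gt2L m n (j' : ℕ) k') : ℂ) = 0 := by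
  rw [inner_prod_form _ _ _ _ _ _ (gt2L_eq m n j k) (gt2L_eq m n j' k'), sum_fLfL hm,
    if_neg (fun h => hjj (Fin.ext (by
      rw [← Nat.mod_eq_of_lt j.isLt, h, Nat.mod_eq_of_lt j'.isLt])))]
  ring

lemma ortho_LL_k (hm : 3 ≤ m) (hn : 4 ≤ n) (hnm : m ≤ n) (j : Fin m) {k k' : ℕ}
    (hk : 1 ≤ k) (hk' : k' < n - 2) (hkk : k < k') :
    (inner ℂ (gt2L m n (j : ℕ) k) (gt2L m n (j : ℕ) k') : ℂ) = 0 := by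
  rw [inner_prod_form _ _ _ _ _ _ (gt2L_eq m n j k) (gt2L_eq m n j k'),
    gt2b_inner hm hnm, LL_off hn hk hk' hkk, mul_zero]

lemma ortho_SF (hm : 3 ≤ m) (j : Fin m) :
    (inner ℂ (gt2S m n (j : ℕ)) (gt2F m n) : ℂ) = 0 := by
  rw [inner_prod_form (gt2fS m (j : ℕ)) (fun _ => (1 / (Real.sqrt ((n : ℝ) * m) : ℂ)))
    (gt2uS n (j : ℕ)) (fun _ => (1 : ℂ)) _ _ (gt2S_eq m n j) (gt2F_eq m n),
    sum_fS_const hm, zero_mul]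

lemma ortho_FL (hm : 3 ≤ m) (hn : 4 ≤ n) (hnm : m ≤ n) (j : Fin m) {k : ℕ}
    (hk1 : 1 ≤ k) (hk2 : k < n - 2) :
    (inner ℂ (gt2F m n) (gt2L m n (j : ℕ) k) : ℂ) = 0 := by
  rw [inner_prod_form (fun _ => (1 / (Real.sqrt ((n : ℝ) * m) : ℂ))) (gt2fL m n (j : ℕ))
    (fun _ => (1 : ℂ)) (gt2b m n (j : ℕ) k) _ _ (gt2F_eq m n) (gt2L_eq m n j k)]
  have h : ∑ y : Fin n, conj (1 : ℂ) * gt2b m n (j : ℕ) k y = 0 := by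
    simp only [map_one, one_mul]
    rw [gt2b_sum hm hnm]
    exact geom_zero hn hk1 hk2
  rw [h, mul_zero]

lemma inner_self_S (hm : 3 ≤ m) (hnm : m ≤ n) (j : Fin m) :
    (inner ℂ (gt2S m n (j : ℕ)) (gt2S m n (j : ℕ)) : ℂ) = 1 := by
  rw [inner_prod_form _ _ _ _ _ _ (gt2S_eq m n j) (gt2S_eq m n j), sum_fSfS hm j.isLt,
    sum_uSuS (lt_of_lt_of_le j.isLt hnm), if_pos rfl, one_mul]

lemma inner_self_L (hm : 3 ≤ m) (hn : 4 ≤ n) (hnm : m ≤ n) (j : Fin m) (k : ℕ) :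
    (inner ℂ (gt2L m n (j : ℕ) k) (gt2L m n (j : ℕ) k) : ℂ) = 1 := by
  rw [inner_prod_form _ _ _ _ _ _ (gt2L_eq m n j k) (gt2L_eq m n j k), sum_fLfL hm,
    if_pos rfl, mul_one, gt2b_inner hm hnm, LL_diag]
  have h1 : (Real.sqrt ((n : ℝ) - 2) : ℂ) * (Real.sqrt ((n : ℝ) - 2) : ℂ) = (n : ℂ) - 2 := by
    rw [← Complex.ofReal_mul, Real.mul_self_sqrt (by
      have h4 : (4 : ℝ) ≤ n := by exact_mod_cast hn
      linarith)]
    push_cast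
    ring
  have h2 : ((n - 2 : ℕ) : ℂ) = (n : ℂ) - 2 := by
    push_cast [Nat.cast_sub (by omega : 2 ≤ n)]; ring
  have h3 : (n : ℂ) - 2 ≠ 0 := by
    rw [← h2]
    exact Nat.cast_ne_zero.mpr (by omega)
  rw [h2, div_mul_div_comm, one_mul, h1, one_div, inv_mul_cancel₀ h3]

lemma inner_self_F (hm : 3 ≤ m) (hn : 4 ≤ n) :
    (inner ℂ (gt2F m n) (gt2F m n) : ℂ) = 1 := by
  rw [inner_prod_form (fun _ => (1 / (Real.sqrt ((n : ℝ) * m) : ℂ)))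
    (fun _ => (1 / (Real.sqrt ((n : ℝ) * m) : ℂ)))
    (fun _ => (1 : ℂ)) (fun _ => (1 : ℂ)) _ _ (gt2F_eq m n) (gt2F_eq m n)]
  rw [conj_invsqrt]
  simp only [map_one, one_mul, Finset.sum_const, card_univ, Fintype.card_fin, nsmul_eq_mul,
    mul_one]
  have h1 : (Real.sqrt ((n : ℝ) * m) : ℂ) * (Real.sqrt ((n : ℝ) * m) : ℂ) = (n : ℂ) * m := by
    rw [← Complex.ofReal_mul, Real.mul_self_sqrt (by positivity)]
    push_cast
    ring
  have hn0 : (n : ℂ) ≠ 0 := Nat.cast_ne_zero.mpr (by omega)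
  have hm0 : (m : ℂ) ≠ 0 := Nat.cast_ne_zero.mpr (by omega)
  have hs : (Real.sqrt ((n : ℝ) * m) : ℂ) ≠ 0 := by
    intro h
    rw [h, mul_zero] at h1
    exact hn0 (by
      rcases mul_eq_zero.mp h1.symm with h' | h'
      · exact h'
      · exact absurd h' hm0)
  rw [div_mul_div_comm, one_mul, h1]
  field_simp

end cases


/-- GenTiles2: for m ≥ 3, n ≥ 4, n ≥ m, the mn − 2m + 1 states above are mutually
orthogonal unit product vectors in ℂᵐ ⊗ ℂⁿ. -/
theorem stmt14 (m n : ℕ) (hm : 3 ≤ m) (hn : 4 ≤ n) (hnm : m ≤ n) :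
    (∀ s t : GT2Index m n, s ≠ t → (inner ℂ (gt2 m n s) (gt2 m n t) : ℂ) = 0) ∧
    (∀ s, ‖gt2 m n s‖ = 1) ∧
    Fintype.card (GT2Index m n) = m * n - 2 * m + 1 := by
  refine ⟨?_, ?_, ?_⟩
  · rintro (j | ⟨j, k⟩ | u) (j' | ⟨j', k'⟩ | u') hst <;> simp only [gt2]
    · exact ortho_SS hnm j j' (fun h => hst (by rw [h]))
    · exact ortho_SL hm hnm j j' _
    · exact ortho_SF hm j
    · rw [← inner_conj_symm, ortho_SL hm hnm j' j _, map_zero]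
    · -- L L
      by_cases hj : j = j'
      · subst hj
        have hkk : k ≠ k' := fun h => hst (by rw [h])
        rcases lt_trichotomy ((k : ℕ) + 1) ((k' : ℕ) + 1) with h | h | h
        · exact ortho_LL_k hm hn hnm j (by omega) (by have := k'.isLt; omega) h
        · exact absurd (Fin.ext (by omega)) hkk
        · rw [← inner_conj_symm,
            ortho_LL_k hm hn hnm j (by omega) (by have := k.isLt; omega) h, map_zero]
      · exact ortho_LL_f hm j j' hj _ _
    · rw [← inner_conj_symm, ortho_FL hm hn hnm j (by omega) (by have := k.isLt; omega),
        map_zero]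
    · rw [← inner_conj_symm, ortho_SF hm j', map_zero]
    · exact ortho_FL hm hn hnm j' (by omega) (by have := k'.isLt; omega)
    · exact absurd rfl hst
  · rintro (j | ⟨j, k⟩ | u)
    · exact norm_eq_one_of_inner _ (inner_self_S hm hnm j)
    · exact norm_eq_one_of_inner _ (inner_self_L hm hn hnm j _)
    · exact norm_eq_one_of_inner _ (inner_self_F hm hn)
  · simp only [Fintype.card_sum, Fintype.card_prod, Fintype.card_fin, Fintype.card_unit,
      Fintype.card_punit]
    have h1 : m * (n - 3) + m * 3 = m * n := by rw [← Nat.mul_add]; congr 1; omega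
    omega
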